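/- Let c be a real number, λ > 0, and β0, β1 real with β0·β1 < λ and √λ·|β0−β1| < λ − β0β1. Then a* > 1−c if and only if β0 − β1 < −((λ−β0β1)/√λ)·tanh(√λ·(1−c)), and a* < 0 if and only if β0 − β1 > ((λ−β0β1)/√λ)·tanh(√λ·(1−c)). -/
import Mathlib


/-- The real inverse hyperbolic tangent, `artanh x = (1/2) ln((1+x)/(1-x))`,
the inverse of `tanh` on `(-1, 1)`. -/
noncomputable def artanh (x : ℝ) : ℝ := (1 / 2) * Real.log ((1 + x) / (1 - x))

/-- The critical point `a*`, the unique zero of `g`. -/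
noncomputable def aStar (c β0 β1 lam : ℝ) : ℝ :=
  (1 / (2 * Real.sqrt lam)) * artanh (Real.sqrt lam * (β1 - β0) / (lam - β0 * β1))
    + (1 - c) / 2

lemma tanh_lt_iff (x t : ℝ) (h1 : -1 < x) (h2 : x < 1) :
    Real.tanh t < x ↔ t < artanh x := by
  have h1x : 0 < 1 - x := by linarith
  have h1x' : 0 < 1 + x := by linarith
  have hc := Real.cosh_pos t
  have he : 0 < Real.exp t := Real.exp_pos t
  have hv : 0 < (Real.exp t)⁻¹ := inv_pos.2 he
  have huv : Real.exp t * (Real.exp t)⁻¹ = 1 := mul_inv_cancel₀ (ne_of_gt he)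
  have step1 : Real.tanh t < x ↔ Real.exp t * Real.exp t * (1 - x) < 1 + x := by
    rw [Real.tanh_eq_sinh_div_cosh, div_lt_iff₀ hc, Real.sinh_eq, Real.cosh_eq, Real.exp_neg]
    constructor
    · intro h
      nlinarith [mul_lt_mul_of_pos_right h he, huv]
    · intro h
      nlinarith [mul_lt_mul_of_pos_right h hv, huv]
  have step2 : Real.exp t * Real.exp t * (1 - x) < 1 + x ↔
      Real.exp (2 * t) < (1 + x) / (1 - x) := by
    rw [lt_div_iff₀ h1x, two_mul, Real.exp_add]
  rw [step1, step2, ← Real.lt_log_iff_exp_lt (div_pos h1x' h1x), artanh]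
  constructor <;> intro h <;> linarith

lemma artanh_neg (x : ℝ) (h1 : -1 < x) (h2 : x < 1) : artanh (-x) = -artanh x := by
  have h1x : (1 : ℝ) - x ≠ 0 := by linarith
  have h1x' : (1 : ℝ) + x ≠ 0 := by linarith
  have hkey : (1 + -x) / (1 - -x) = ((1 + x) / (1 - x))⁻¹ := by
    rw [inv_div]; ring_nf
  rw [artanh, artanh, hkey, Real.log_inv]
  ring

lemma lt_tanh_iff (x t : ℝ) (h1 : -1 < x) (h2 : x < 1) :
    x < Real.tanh t ↔ artanh x < t := by
  have := tanh_lt_iff (-x) (-t) (by linarith) (by linarith)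
  rw [Real.tanh_neg, artanh_neg x h1 h2] at this
  constructor <;> intro h <;> [have := this.1 (by linarith); have := this.2 (by linarith)] <;> linarith


theorem stmt16 (c lam β0 β1 : ℝ) (hlam : 0 < lam) (hgt : β0 * β1 < lam)
    (hlt : Real.sqrt lam * |β0 - β1| < lam - β0 * β1) :
    (1 - c < aStar c β0 β1 lam ↔
      β0 - β1 < -(((lam - β0 * β1) / Real.sqrt lam) * Real.tanh (Real.sqrt lam * (1 - c)))) ∧
    (aStar c β0 β1 lam < 0 ↔
      ((lam - β0 * β1) / Real.sqrt lam) * Real.tanh (Real.sqrt lam * (1 - c)) < β0 - β1) := by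
  set s := Real.sqrt lam with hsdef
  have hs : 0 < s := Real.sqrt_pos.2 hlam
  set D := lam - β0 * β1 with hDdef
  have hD : 0 < D := sub_pos.2 hgt
  set x := s * (β1 - β0) / D with hxdef
  have habs : |s * (β1 - β0)| < D := by
    rw [abs_mul, abs_of_pos hs, abs_sub_comm]
    exact hlt
  have hx1 : -1 < x := by
    rw [hxdef, lt_div_iff₀ hD, neg_one_mul]
    have := (abs_lt.1 habs).1
    linarith
  have hx2 : x < 1 := by
    rw [hxdef, div_lt_one hD]
    exact (abs_lt.1 habs).2
  set A := artanh x with hAdef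
  set T := Real.tanh (s * (1 - c)) with hTdef
  have hstar : aStar c β0 β1 lam = (1 / (2 * s)) * A + (1 - c) / 2 := rfl
  have h2s : (0:ℝ) < 2 * s := by linarith
  have key1 : (1 - c < aStar c β0 β1 lam) ↔ s * (1 - c) < A := by
    rw [hstar, show (1:ℝ)/(2*s)*A + (1-c)/2 = A/(2*s) + (1-c)/2 by ring,
      show s*(1-c) = ((1-c)/2) * (2*s) by ring, ← lt_div_iff₀ h2s]
    constructor <;> intro h <;> linarith
  have key2 : (aStar c β0 β1 lam < 0) ↔ A < -(s * (1 - c)) := by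
    rw [hstar, show (1:ℝ)/(2*s)*A + (1-c)/2 = A/(2*s) + (1-c)/2 by ring,
      show -(s*(1-c)) = (-((1-c)/2)) * (2*s) by ring, ← div_lt_iff₀ h2s]
    constructor <;> intro h <;> linarith
  constructor
  · rw [key1, ← tanh_lt_iff x (s * (1 - c)) hx1 hx2, ← hTdef, hxdef, lt_div_iff₀ hD]
    constructor <;> intro h
    · rw [show -((D / s) * T) = (-(T * D)) / s by ring, lt_div_iff₀ hs]
      nlinarith
    · rw [show -((D / s) * T) = (-(T * D)) / s by ring, lt_div_iff₀ hs] at h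
      nlinarith
  · rw [key2, show -(s * (1 - c)) = s * -(1 - c) by ring,
      ← lt_tanh_iff x (s * -(1 - c)) hx1 hx2,
      show Real.tanh (s * -(1 - c)) = -T by rw [hTdef, ← Real.tanh_neg]; ring_nf,
      hxdef, div_lt_iff₀ hD]
    constructor <;> intro h
    · rw [show (D / s) * T = (T * D) / s by ring, div_lt_iff₀ hs]
      nlinarith
    · rw [show (D / s) * T = (T * D) / s by ring, div_lt_iff₀ hs] at h
      nlinarith
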